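/- Let φ ∈ ℝ. Then there exists a constant c(φ) > 0 such that for all p ∈ (0, ∞), the integral Menger curvature satisfies M_p(E_φ) ≤ c(φ)^p · M_p(E_{π/2}). -/

import Mathlib

open MeasureTheory Real
open scoped ENNReal NNReal Classical

/-- The Menger curvature of three points in `ℝⁿ`: the reciprocal of the circumradius,
`κ(x,y,z) = 2 dist(z, L_{x,y}) / (|x-z| |y-z|)` for pairwise distinct non-collinear points,
and `0` otherwise. -/
noncomputable def menger {n : ℕ} (x y z : EuclideanSpace ℝ (Fin n)) : ℝ :=
  if x ≠ y ∧ y ≠ z ∧ x ≠ z ∧ ¬ Collinear ℝ ({x, y, z} : Set (EuclideanSpace ℝ (Fin n)))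
  then 2 * Metric.infDist z (affineSpan ℝ ({x, y} : Set (EuclideanSpace ℝ (Fin n))) :
      Set (EuclideanSpace ℝ (Fin n))) / (dist x z * dist y z)
  else 0

/-- The point `(a, b) ∈ ℝ²` (with the Euclidean metric). -/
noncomputable def pt (a b : ℝ) : EuclideanSpace ℝ (Fin 2) :=
  (WithLp.equiv 2 (Fin 2 → ℝ)).symm ![a, b]

abbrev E2 := EuclideanSpace ℝ (Fin 2)
open Metric

/-- The one-corner set `E_φ = ([0,1) × {0}) ∪ [0,1)·(cos φ, sin φ)`. -/
noncomputable def Eset (φ : ℝ) : Set (EuclideanSpace ℝ (Fin 2)) :=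
  {x | ∃ t ∈ Set.Ico (0:ℝ) 1, x = pt t 0} ∪
    {x | ∃ t ∈ Set.Ico (0:ℝ) 1, x = t • pt (Real.cos φ) (Real.sin φ)}

/-- Integral Menger curvature `M_p(X)` (innermost integration in `x`). -/
noncomputable def Mp (p : ℝ) (X : Set (EuclideanSpace ℝ (Fin 2))) : ℝ≥0∞ :=
  ∫⁻ z in X, ∫⁻ y in X, ∫⁻ x in X,
    (ENNReal.ofReal (menger x y z)) ^ p ∂μH[1] ∂μH[1] ∂μH[1]

/-- Intermediate energy `I_p(X)`. -/
noncomputable def Ip (p : ℝ) (X : Set (EuclideanSpace ℝ (Fin 2))) : ℝ≥0∞ :=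
  ∫⁻ y in X, ∫⁻ x in X,
    (⨆ z ∈ X, ENNReal.ofReal (menger x y z)) ^ p ∂μH[1] ∂μH[1]

/-- Global curvature energy `U_p(X)`. -/
noncomputable def Up (p : ℝ) (X : Set (EuclideanSpace ℝ (Fin 2))) : ℝ≥0∞ :=
  ∫⁻ x in X, (⨆ y ∈ X, ⨆ z ∈ X, ENNReal.ofReal (menger x y z)) ^ p ∂μH[1]

lemma menger_nonneg {n : ℕ} (x y z : EuclideanSpace ℝ (Fin n)) : 0 ≤ menger x y z := by
  unfold menger
  split
  · exact div_nonneg (mul_nonneg (by norm_num) infDist_nonneg)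
      (mul_nonneg dist_nonneg dist_nonneg)
  · exact le_refl _

lemma collinear_image {s : Set E2} (f : E2 →ₗ[ℝ] E2) (h : Collinear ℝ s) :
    Collinear ℝ (f '' s) := by
  rw [collinear_iff_exists_forall_eq_smul_vadd] at h ⊢
  obtain ⟨p, v, hv⟩ := h
  refine ⟨f p, f v, ?_⟩
  rintro _ ⟨q, hq, rfl⟩
  obtain ⟨r, rfl⟩ := hv q hq
  exact ⟨r, by simp [map_add, LinearMap.map_smul]⟩

lemma infDist_image_le {f : E2 → E2} {K : ℝ} (hK : 0 < K)
    (hf : ∀ a b, dist (f a) (f b) ≤ K * dist a b) {s : Set E2} (hs : s.Nonempty) (z : E2) :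
    infDist (f z) (f '' s) ≤ K * infDist z s := by
  refine le_of_forall_pos_le_add fun ε hε => ?_
  obtain ⟨w, hws, hw⟩ := (infDist_lt_iff hs).1
    (show infDist z s < infDist z s + ε / K by have : 0 < ε / K := div_pos hε hK; linarith)
  calc infDist (f z) (f '' s) ≤ dist (f z) (f w) :=
        infDist_le_dist_of_mem (Set.mem_image_of_mem f hws)
    _ ≤ K * dist z w := hf z w
    _ ≤ K * (infDist z s + ε / K) := by nlinarith
    _ = K * infDist z s + ε := by field_simp

lemma menger_map_le (g : E2 ≃L[ℝ] E2) {K K' : ℝ} (hK : 0 < K) (hK' : 0 < K')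
    (hg : ∀ a b, dist (g a) (g b) ≤ K * dist a b)
    (hg' : ∀ a b, dist a b ≤ K' * dist (g a) (g b)) (x y z : E2) :
    menger (g x) (g y) (g z) ≤ (K * K' ^ 2) * menger x y z := by
  by_cases h : (g x ≠ g y ∧ g y ≠ g z ∧ g x ≠ g z ∧
      ¬ Collinear ℝ ({g x, g y, g z} : Set E2))
  · obtain ⟨hxy', hyz', hxz', hcol'⟩ := h
    have hxy : x ≠ y := fun e => hxy' (by rw [e])
    have hyz : y ≠ z := fun e => hyz' (by rw [e])
    have hxz : x ≠ z := fun e => hxz' (by rw [e])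
    have hcol : ¬ Collinear ℝ ({x, y, z} : Set E2) := by
      intro hc
      apply hcol'
      have := collinear_image (g : E2 →ₗ[ℝ] E2) hc
      simpa [Set.image_insert_eq] using this
    rw [menger, if_pos ⟨hxy', hyz', hxz', hcol'⟩, menger, if_pos ⟨hxy, hyz, hxz, hcol⟩]
    have hspan : (affineSpan ℝ ({g x, g y} : Set E2) : Set E2)
        = g '' (affineSpan ℝ ({x, y} : Set E2) : Set E2) := by
      have : ({g x, g y} : Set E2) = (g : E2 →ₗ[ℝ] E2).toAffineMap '' {x, y} := by
        simp [Set.image_insert_eq]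
      rw [this, ← AffineSubspace.map_span, AffineSubspace.coe_map]
      rfl
    have hne : (affineSpan ℝ ({x, y} : Set E2) : Set E2).Nonempty :=
      ⟨x, subset_affineSpan ℝ _ (by simp)⟩
    have hd : infDist (g z) (affineSpan ℝ ({g x, g y} : Set E2) : Set E2)
        ≤ K * infDist z (affineSpan ℝ ({x, y} : Set E2) : Set E2) := by
      rw [hspan]
      exact infDist_image_le hK hg hne z
    have haz : (0:ℝ) < dist x z := dist_pos.2 hxz
    have hbz : (0:ℝ) < dist y z := dist_pos.2 hyz
    have haz' : (0:ℝ) < dist (g x) (g z) := dist_pos.2 hxz'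
    have hbz' : (0:ℝ) < dist (g y) (g z) := dist_pos.2 hyz'
    have hd0 : (0:ℝ) ≤ infDist z (affineSpan ℝ ({x, y} : Set E2) : Set E2) := infDist_nonneg
    have ha : dist x z ≤ K' * dist (g x) (g z) := hg' x z
    have hb : dist y z ≤ K' * dist (g y) (g z) := hg' y z
    have main : ∀ d d' a b a' b' : ℝ, 0 ≤ d → 0 ≤ d' → 0 < a → 0 < b → 0 < a' → 0 < b' →
        d' ≤ K * d → a ≤ K' * a' → b ≤ K' * b' →
        2 * d' / (a' * b') ≤ K * K' ^ 2 * (2 * d / (a * b)) := by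
      intro d d' a b a' b' h0 h0' ha0 hb0 ha0' hb0' hdd haa hbb
      rw [← mul_div_assoc, div_le_div_iff₀ (by positivity) (by positivity)]
      have key : a * b ≤ K' ^ 2 * (a' * b') := by nlinarith
      have h1 : 2 * d' * (a * b) ≤ 2 * (K * d) * (a * b) := by
        nlinarith [mul_le_mul_of_nonneg_right hdd (le_of_lt (mul_pos ha0 hb0))]
      have h2 : 2 * (K * d) * (a * b) ≤ 2 * (K * d) * (K' ^ 2 * (a' * b')) := by
        have h0'' : (0:ℝ) ≤ 2 * (K * d) := by positivity
        exact mul_le_mul_of_nonneg_left key h0''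
      calc 2 * d' * (a * b) ≤ 2 * (K * d) * (K' ^ 2 * (a' * b')) := le_trans h1 h2
        _ = K * K' ^ 2 * (2 * d) * (a' * b') := by ring
    exact main _ _ _ _ _ _ hd0 infDist_nonneg haz hbz haz' hbz' hd ha hb
  · rw [menger, if_neg h]
    exact mul_nonneg (by positivity) (menger_nonneg x y z)

@[simp] lemma pt_app0 (a b : ℝ) : pt a b 0 = a := rfl
@[simp] lemma pt_app1 (a b : ℝ) : pt a b 1 = b := rfl
lemma pt_smul (t a b : ℝ) : t • pt a b = pt (t*a) (t*b) := by
  ext i; fin_cases i <;> simp [pt]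
lemma pt_eta (x : E2) : pt (x 0) (x 1) = x := by
  ext i; fin_cases i <;> rfl

noncomputable def gmap (φ : ℝ) (hs : Real.sin φ ≠ 0) : E2 ≃L[ℝ] E2 :=
  LinearEquiv.toContinuousLinearEquiv
  { toFun := fun x => pt (x 0 + x 1 * Real.cos φ) (x 1 * Real.sin φ)
    map_add' := fun x y => by
      ext i; fin_cases i <;> · simp [pt]; ring
    map_smul' := fun t x => by
      ext i; fin_cases i <;> · show _ = _; simp [pt]; ring
    invFun := fun y => pt (y 0 - y 1 * Real.cos φ / Real.sin φ) (y 1 / Real.sin φ)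
    left_inv := fun x => by
      ext i; fin_cases i <;> · show _ = _; simp [pt]; try field_simp; try ring
    right_inv := fun y => by
      ext i; fin_cases i <;> · show _ = _; simp [pt]; try field_simp; try ring }

lemma gmap_apply (φ : ℝ) (hs : Real.sin φ ≠ 0) (x : E2) :
    gmap φ hs x = pt (x 0 + x 1 * Real.cos φ) (x 1 * Real.sin φ) := rfl

def A1 : Set E2 := {x | ∃ t ∈ Set.Ico (0:ℝ) 1, x = pt t 0}
def Arm (φ : ℝ) : Set E2 := {x | ∃ t ∈ Set.Ico (0:ℝ) 1, x = t • pt (Real.cos φ) (Real.sin φ)}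

lemma A1_eq : A1 = {x : E2 | x 0 ∈ Set.Ico (0:ℝ) 1 ∧ x 1 = 0} := by
  ext x
  constructor
  · rintro ⟨t, ht, rfl⟩; exact ⟨ht, rfl⟩
  · rintro ⟨h0, h1⟩; exact ⟨x 0, h0, by rw [← h1, pt_eta]⟩

lemma Arm_pi_div_two_eq :
    Arm (π/2) = {x : E2 | x 0 = 0 ∧ x 1 ∈ Set.Ico (0:ℝ) 1} := by
  have hv : pt (Real.cos (π/2)) (Real.sin (π/2)) = pt 0 1 := by
    rw [Real.cos_pi_div_two, Real.sin_pi_div_two]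
  ext x
  constructor
  · rintro ⟨t, ht, rfl⟩
    rw [hv, pt_smul]
    exact ⟨by simp, by simpa using ht⟩
  · rintro ⟨h0, h1⟩
    refine ⟨x 1, h1, ?_⟩
    rw [hv, pt_smul, mul_zero, mul_one, ← h0, pt_eta]

lemma measurable_proj (i : Fin 2) : Measurable fun x : E2 => x i :=
  (EuclideanSpace.proj i).continuous.measurable

lemma A1_measurable : MeasurableSet A1 := by
  rw [A1_eq]
  exact ((measurable_proj 0) measurableSet_Ico).inter
    ((measurable_proj 1) (measurableSet_singleton 0))

lemma Arm_pi_div_two_measurable : MeasurableSet (Arm (π/2)) := by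
  rw [Arm_pi_div_two_eq]
  exact ((measurable_proj 0) (measurableSet_singleton 0)).inter
    ((measurable_proj 1) measurableSet_Ico)

variable {φ : ℝ} (hs : Real.sin φ ≠ 0)

lemma gmap_fix {x : E2} (hx : x 1 = 0) : gmap φ hs x = x := by
  rw [gmap_apply, hx, zero_mul, add_zero, zero_mul, ← hx, pt_eta]

lemma gmap_eqOn_A1 : Set.EqOn (gmap φ hs) id A1 := by
  intro x hx
  rw [A1_eq] at hx
  exact gmap_fix hs hx.2

lemma gmap_lip_A1 : LipschitzOnWith 1 (gmap φ hs) A1 :=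
  LipschitzOnWith.of_dist_le_mul fun x hx y hy => by
    rw [gmap_eqOn_A1 hs hx, gmap_eqOn_A1 hs hy, NNReal.coe_one, one_mul, id, id]

lemma gmap_dist_A2 {x y : E2} (hx : x ∈ Arm (π/2)) (hy : y ∈ Arm (π/2)) :
    dist (gmap φ hs x) (gmap φ hs y) = dist x y := by
  rw [Arm_pi_div_two_eq] at hx hy
  rw [gmap_apply, gmap_apply, EuclideanSpace.dist_eq, EuclideanSpace.dist_eq]
  congr 1
  simp only [Fin.sum_univ_two, pt_app0, pt_app1, Real.dist_eq, hx.1, hy.1, sq_abs]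
  linear_combination (x 1 - y 1)^2 * (Real.sin_sq_add_cos_sq φ)

lemma gmap_lip_A2 : LipschitzOnWith 1 (gmap φ hs) (Arm (π/2)) :=
  LipschitzOnWith.of_dist_le_mul fun x hx y hy => by
    rw [gmap_dist_A2 hs hx hy, NNReal.coe_one, one_mul]

lemma gmap_image_A1 : (gmap φ hs) '' A1 = A1 := by
  rw [Set.EqOn.image_eq (gmap_eqOn_A1 hs), Set.image_id]

lemma gmap_image_A2 : (gmap φ hs) '' Arm (π/2) = Arm φ := by
  ext x
  constructor
  · rintro ⟨y, hy, rfl⟩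
    obtain ⟨t, ht, rfl⟩ := hy
    refine ⟨t, ht, ?_⟩
    rw [Real.cos_pi_div_two, Real.sin_pi_div_two, pt_smul, pt_smul, mul_zero, mul_one,
      gmap_apply]
    simp
  · rintro ⟨t, ht, rfl⟩
    refine ⟨t • pt (Real.cos (π/2)) (Real.sin (π/2)), ⟨t, ht, rfl⟩, ?_⟩
    rw [Real.cos_pi_div_two, Real.sin_pi_div_two, pt_smul, pt_smul, mul_zero, mul_one,
      gmap_apply]
    simp

lemma restrict_le_map :
    μH[1].restrict (A1 ∪ Arm φ) ≤
      Measure.map (gmap φ hs) (μH[1].restrict (A1 ∪ Arm (π/2))) := by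
  have hgm : Measurable (gmap φ hs) := (gmap φ hs).continuous.measurable
  refine Measure.le_iff.2 fun S hS => ?_
  rw [Measure.restrict_apply hS, Measure.map_apply hgm hS,
    Measure.restrict_apply (hgm hS)]
  set T1 : Set E2 := (gmap φ hs) ⁻¹' S ∩ A1 with hT1
  set T2 : Set E2 := (gmap φ hs) ⁻¹' S ∩ Arm (π/2) with hT2
  have himg1 : (gmap φ hs) '' T1 = S ∩ A1 := by
    rw [hT1, Set.image_inter (gmap φ hs).injective,
      Set.image_preimage_eq S (gmap φ hs).surjective, gmap_image_A1]
  have himg2 : (gmap φ hs) '' T2 = S ∩ Arm φ := by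
    rw [hT2, Set.image_inter (gmap φ hs).injective,
      Set.image_preimage_eq S (gmap φ hs).surjective, gmap_image_A2]
  have h1 : μH[1] (S ∩ A1) ≤ μH[1] T1 := by
    rw [← himg1]
    have h := ((gmap_lip_A1 (φ := φ) hs).mono
      (show T1 ⊆ A1 from Set.inter_subset_right)).hausdorffMeasure_image_le
      (zero_le_one (α := ℝ))
    simpa using h
  have h2 : μH[1] (S ∩ Arm φ) ≤ μH[1] T2 := by
    rw [← himg2]
    have h := ((gmap_lip_A2 (φ := φ) hs).mono
      (show T2 ⊆ Arm (π/2) from Set.inter_subset_right)).hausdorffMeasure_image_le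
      (zero_le_one (α := ℝ))
    simpa using h
  have hT2m : MeasurableSet T2 := (hgm hS).inter Arm_pi_div_two_measurable
  have hsum : μH[1] T1 + μH[1] T2 = μH[1] (T1 ∪ T2) + μH[1] (T1 ∩ T2) :=
    (measure_union_add_inter T1 hT2m).symm
  have hcap : μH[1] (T1 ∩ T2) = 0 := by
    haveI : NullSingletonClass (μH[1] : Measure E2) := Measure.nullSingletonClass_hausdorff E2 one_pos
    refine measure_mono_null ?_ (measure_singleton (pt 0 0))
    rintro x ⟨⟨-, hx1⟩, -, hx2⟩
    rw [A1_eq] at hx1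
    rw [Arm_pi_div_two_eq] at hx2
    rw [← pt_eta x, hx1.2, hx2.1]
    rfl
  have hunion : T1 ∪ T2 = (gmap φ hs) ⁻¹' S ∩ (A1 ∪ Arm (π/2)) := by
    rw [hT1, hT2, Set.inter_union_distrib_left]
  calc μH[1] (S ∩ (A1 ∪ Arm φ)) ≤ μH[1] (S ∩ A1) + μH[1] (S ∩ Arm φ) := by
        rw [Set.inter_union_distrib_left]
        exact measure_union_le _ _
    _ ≤ μH[1] T1 + μH[1] T2 := add_le_add h1 h2
    _ = μH[1] (T1 ∪ T2) + μH[1] (T1 ∩ T2) := hsum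
    _ = μH[1] ((gmap φ hs) ⁻¹' S ∩ (A1 ∪ Arm (π/2))) := by rw [hcap, add_zero, hunion]

lemma Eset_eq (φ : ℝ) : Eset φ = A1 ∪ Arm φ := rfl

/-- `M_p(E_φ) ≤ c(φ)^p · M_p(E_{π/2})`. -/
theorem Mp_Eset_le (φ : ℝ) :
    ∃ c : ℝ, 0 < c ∧ ∀ p : ℝ, 0 < p →
      Mp p (Eset φ) ≤ ENNReal.ofReal (c ^ p) * Mp p (Eset (π / 2)) := by
  by_cases hs : Real.sin φ = 0
  · -- degenerate case: `E_φ` is collinear, so `M_p(E_φ) = 0`.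
    refine ⟨1, one_pos, fun p hp => ?_⟩
    have hcol : Collinear ℝ (Eset φ) := by
      rw [collinear_iff_exists_forall_eq_smul_vadd]
      refine ⟨0, pt 1 0, ?_⟩
      rintro q (⟨t, -, rfl⟩ | ⟨t, -, rfl⟩)
      · exact ⟨t, by rw [pt_smul]; simp⟩
      · refine ⟨t * Real.cos φ, ?_⟩
        rw [pt_smul, pt_smul, hs, mul_zero, mul_zero]
        simp [mul_assoc]
    have hm : ∀ x ∈ Eset φ, ∀ y ∈ Eset φ, ∀ z ∈ Eset φ, menger x y z = 0 := by
      intro x hx y hy z hz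
      rw [menger, if_neg]
      rintro ⟨-, -, -, hc⟩
      refine hc (hcol.subset ?_)
      rintro q (rfl | rfl | rfl) <;> assumption
    have hXm : MeasurableSet (Eset φ) := by
      have : Arm φ = {x : E2 | x 1 = 0 ∧ x 0 * Real.cos φ ∈ Set.Ico (0:ℝ) 1} := by
        have hc2 : Real.cos φ * Real.cos φ = 1 := by
          have := Real.sin_sq_add_cos_sq φ
          nlinarith [this, hs]
        ext x
        constructor
        · rintro ⟨t, ht, rfl⟩
          rw [pt_smul, hs, mul_zero]
          refine ⟨rfl, ?_⟩
          simpa [mul_assoc, mul_comm, hc2, mul_left_comm] using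
            (show t * Real.cos φ * Real.cos φ ∈ Set.Ico (0:ℝ) 1 by
              rw [mul_assoc, hc2, mul_one]; exact ht)
        · rintro ⟨h1, h0⟩
          refine ⟨x 0 * Real.cos φ, h0, ?_⟩
          rw [pt_smul, hs, mul_zero, mul_assoc, hc2, mul_one, ← h1, pt_eta]
      rw [Eset_eq, this]
      exact A1_measurable.union
        (((measurable_proj 1) (measurableSet_singleton 0)).inter
          ((measurable_proj 0).mul_const _ measurableSet_Ico))
    have hzero : Mp p (Eset φ) = 0 := by
      have h3 : ∀ z ∈ Eset φ, (∫⁻ y in Eset φ, ∫⁻ x in Eset φ,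
          (ENNReal.ofReal (menger x y z)) ^ p ∂μH[1] ∂μH[1]) = 0 := by
        intro z hz
        have h2 : ∀ y ∈ Eset φ, (∫⁻ x in Eset φ,
            (ENNReal.ofReal (menger x y z)) ^ p ∂μH[1]) = 0 := by
          intro y hy
          have h1 : ∀ x ∈ Eset φ,
              (ENNReal.ofReal (menger x y z)) ^ p = (0:ℝ≥0∞) := by
            intro x hx
            rw [hm x hx y hy z hz]
            simp [ENNReal.zero_rpow_of_pos hp]
          rw [setLIntegral_congr_fun hXm h1, lintegral_zero]
        rw [setLIntegral_congr_fun hXm h2, lintegral_zero]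
      rw [Mp, setLIntegral_congr_fun hXm h3, lintegral_zero]
    rw [hzero]
    exact bot_le
  · set g := gmap φ hs with hg_def
    set K : ℝ := ‖(g : E2 →L[ℝ] E2)‖ + 1 with hK_def
    set K' : ℝ := ‖((g.symm : E2 ≃L[ℝ] E2) : E2 →L[ℝ] E2)‖ + 1 with hK'_def
    have hK : 0 < K := by positivity
    have hK' : 0 < K' := by positivity
    have hg : ∀ a b : E2, dist (g a) (g b) ≤ K * dist a b := by
      intro a b
      have h := (g : E2 →L[ℝ] E2).lipschitz.dist_le_mul a b
      have : ‖(g : E2 →L[ℝ] E2)‖ * dist a b ≤ K * dist a b :=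
        mul_le_mul_of_nonneg_right (by rw [hK_def]; linarith) dist_nonneg
      calc dist (g a) (g b) ≤ ‖(g : E2 →L[ℝ] E2)‖ * dist a b := by
            simpa using h
        _ ≤ K * dist a b := this
    have hg' : ∀ a b : E2, dist a b ≤ K' * dist (g a) (g b) := by
      intro a b
      have h := ((g.symm : E2 ≃L[ℝ] E2) : E2 →L[ℝ] E2).lipschitz.dist_le_mul (g a) (g b)
      have heq : dist (g.symm (g a)) (g.symm (g b)) = dist a b := by
        rw [g.symm_apply_apply, g.symm_apply_apply]
      calc dist a b = dist (g.symm (g a)) (g.symm (g b)) := heq.symm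
        _ ≤ ‖((g.symm : E2 ≃L[ℝ] E2) : E2 →L[ℝ] E2)‖ * dist (g a) (g b) := by simpa using h
        _ ≤ K' * dist (g a) (g b) :=
            mul_le_mul_of_nonneg_right (by rw [hK'_def]; linarith) dist_nonneg
    set C : ℝ := K * K' ^ 2 with hC_def
    have hC : 0 < C := by positivity
    refine ⟨C, hC, fun p hp => ?_⟩
    have hgm : Measurable g := g.continuous.measurable
    have hμ : μH[1].restrict (Eset φ) ≤
        Measure.map g (μH[1].restrict (Eset (π/2))) := by
      rw [Eset_eq, Eset_eq]
      exact restrict_le_map hs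
    have hpt : ∀ x y z : E2, (ENNReal.ofReal (menger (g x) (g y) (g z))) ^ p
        ≤ ENNReal.ofReal (C ^ p) * (ENNReal.ofReal (menger x y z)) ^ p := by
      intro x y z
      have h := menger_map_le g hK hK' hg hg' x y z
      calc (ENNReal.ofReal (menger (g x) (g y) (g z))) ^ p
          ≤ (ENNReal.ofReal (C * menger x y z)) ^ p :=
            ENNReal.rpow_le_rpow (ENNReal.ofReal_le_ofReal h) hp.le
        _ = (ENNReal.ofReal C * ENNReal.ofReal (menger x y z)) ^ p := by
            rw [ENNReal.ofReal_mul hC.le]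
        _ = (ENNReal.ofReal C) ^ p * (ENNReal.ofReal (menger x y z)) ^ p :=
            ENNReal.mul_rpow_of_nonneg _ _ hp.le
        _ = ENNReal.ofReal (C ^ p) * (ENNReal.ofReal (menger x y z)) ^ p := by
            rw [ENNReal.ofReal_rpow_of_pos hC]
    calc Mp p (Eset φ)
        ≤ ∫⁻ z, (∫⁻ y in Eset φ, ∫⁻ x in Eset φ,
            (ENNReal.ofReal (menger x y z)) ^ p ∂μH[1] ∂μH[1])
            ∂(Measure.map g (μH[1].restrict (Eset (π/2)))) :=
          lintegral_mono' hμ le_rfl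
      _ ≤ ∫⁻ z in Eset (π/2), (∫⁻ y in Eset φ, ∫⁻ x in Eset φ,
            (ENNReal.ofReal (menger x y (g z))) ^ p ∂μH[1] ∂μH[1]) ∂μH[1] :=
          lintegral_map_le _ g
      _ ≤ ∫⁻ z in Eset (π/2), (∫⁻ y in Eset (π/2), ∫⁻ x in Eset (π/2),
            ENNReal.ofReal (C ^ p) *
              (ENNReal.ofReal (menger x y z)) ^ p ∂μH[1] ∂μH[1]) ∂μH[1] := by
          refine lintegral_mono fun z => ?_
          calc (∫⁻ y in Eset φ, ∫⁻ x in Eset φ,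
                (ENNReal.ofReal (menger x y (g z))) ^ p ∂μH[1] ∂μH[1])
              ≤ ∫⁻ y, (∫⁻ x in Eset φ, (ENNReal.ofReal (menger x y (g z))) ^ p ∂μH[1])
                  ∂(Measure.map g (μH[1].restrict (Eset (π/2)))) :=
                lintegral_mono' hμ le_rfl
            _ ≤ ∫⁻ y in Eset (π/2), (∫⁻ x in Eset φ,
                  (ENNReal.ofReal (menger x (g y) (g z))) ^ p ∂μH[1]) ∂μH[1] :=
                lintegral_map_le _ g
            _ ≤ ∫⁻ y in Eset (π/2), (∫⁻ x in Eset (π/2),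
                  ENNReal.ofReal (C ^ p) *
                    (ENNReal.ofReal (menger x y z)) ^ p ∂μH[1]) ∂μH[1] := by
                refine lintegral_mono fun y => ?_
                calc (∫⁻ x in Eset φ, (ENNReal.ofReal (menger x (g y) (g z))) ^ p ∂μH[1])
                    ≤ ∫⁻ x, (ENNReal.ofReal (menger x (g y) (g z))) ^ p
                        ∂(Measure.map g (μH[1].restrict (Eset (π/2)))) :=
                      lintegral_mono' hμ le_rfl
                  _ ≤ ∫⁻ x in Eset (π/2),
                        (ENNReal.ofReal (menger (g x) (g y) (g z))) ^ p ∂μH[1] :=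
                      lintegral_map_le _ g
                  _ ≤ ∫⁻ x in Eset (π/2), ENNReal.ofReal (C ^ p) *
                        (ENNReal.ofReal (menger x y z)) ^ p ∂μH[1] :=
                      lintegral_mono fun x => hpt x y z
      _ = ENNReal.ofReal (C ^ p) * Mp p (Eset (π/2)) := by
          rw [Mp]
          simp only [lintegral_const_mul' _ _ ENNReal.ofReal_ne_top]
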